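/- Let k ≥ 2 and let {t_n} be the 2k-nacci sequence. Then ν_2(t_n) = ν_2(n) + ν_2(k-1) + 2 whenever n ≡ 0 (mod 2(2k+1)) and n > 0. -/

import Mathlib

section TwoKNacciDev

variable (k : ℕ) (t : ℕ → ℕ)




lemma tk_sum_shift (hk : 2 ≤ k)
    (hrec : ∀ n, 2 * k ≤ n → t n = ∑ i ∈ Finset.Icc 1 (2 * k), t (n - i)) :
    ∀ n, t (n + 2 * k) = ∑ i ∈ Finset.range (2 * k), t (n + i) := by
  intro n
  rw [hrec (n + 2 * k) (by omega)]
  apply Finset.sum_nbij' (fun i => 2 * k - i) (fun i => 2 * k - i)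
  · intro a ha; simp only [Finset.mem_Icc] at ha; simp only [Finset.mem_range]; omega
  · intro a ha; simp only [Finset.mem_range] at ha; simp only [Finset.mem_Icc]; omega
  · intro a ha; simp only [Finset.mem_Icc] at ha; omega
  · intro a ha; simp only [Finset.mem_range] at ha; omega
  · intro a ha; simp only [Finset.mem_Icc] at ha
    congr 1; omega

lemma tk_rec3 (hk : 2 ≤ k)
    (hrec : ∀ n, 2 * k ≤ n → t n = ∑ i ∈ Finset.Icc 1 (2 * k), t (n - i)) :
    ∀ n, t (n + 2 * k + 1) + t n = 2 * t (n + 2 * k) := by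
  intro n
  have hs1 := tk_sum_shift k t hk hrec (n + 1)
  have hs2 := tk_sum_shift k t hk hrec n
  have e1 : ∑ i ∈ Finset.range (2 * k + 1), t (n + i)
      = (∑ i ∈ Finset.range (2 * k), t (n + 1 + i)) + t n := by
    rw [Finset.sum_range_succ']
    simp only [Nat.add_zero]
    congr 1
    apply Finset.sum_congr rfl; intro i _; congr 1; omega
  have e2 : ∑ i ∈ Finset.range (2 * k + 1), t (n + i)
      = (∑ i ∈ Finset.range (2 * k), t (n + i)) + t (n + 2 * k) :=
    Finset.sum_range_succ _ _
  have e3 : n + 1 + 2 * k = n + 2 * k + 1 := by omega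
  rw [e3] at hs1
  omega

lemma tk_rec3z (hk : 2 ≤ k)
    (hrec : ∀ n, 2 * k ≤ n → t n = ∑ i ∈ Finset.Icc 1 (2 * k), t (n - i)) :
    ∀ n, (t (n + 2 * k + 1) : ℤ) = 2 * t (n + 2 * k) - t n := by
  intro n
  have h := tk_rec3 k t hk hrec n
  have h2 : (t (n + 2 * k + 1) : ℤ) + t n = 2 * t (n + 2 * k) := by exact_mod_cast h
  linarith

lemma tk_2k (hk : 2 ≤ k) (h0 : t 0 = 0)
    (h1 : ∀ n, 1 ≤ n → n ≤ 2 * k - 1 → t n = 1)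
    (hrec : ∀ n, 2 * k ≤ n → t n = ∑ i ∈ Finset.Icc 1 (2 * k), t (n - i)) :
    t (2 * k) = 2 * k - 1 := by
  have h := tk_sum_shift k t hk hrec 0
  simp only [Nat.zero_add] at h
  have e : ∑ i ∈ Finset.range (2 * k), t i
      = ∑ i ∈ Finset.range (2 * k), if i = 0 then 0 else 1 := by
    apply Finset.sum_congr rfl
    intro i hi; simp only [Finset.mem_range] at hi
    by_cases hi0 : i = 0
    · simp [hi0, h0]
    · simp only [hi0, if_false]; exact h1 i (by omega) (by omega)
  rw [e] at h
  obtain ⟨m, hm⟩ : ∃ m, 2 * k = m + 1 := ⟨2*k-1, by omega⟩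
  rw [hm, Finset.sum_range_succ'] at h
  simp at h
  rw [hm]
  omega



def tkG (k V q ρ : ℕ) : ℤ :=
  1 + (-1)^q * ((if ρ = 2*k then (2*(k:ℤ) - 2) else 0)
    - (if ρ ≤ V+1 then 2^ρ * ((q + ρ - 1).choose ρ : ℤ) else 0))

lemma tkG_low {k V q ρ : ℕ} (h : ρ ≤ V+1) (h2 : ρ ≠ 2*k) :
    tkG k V q ρ = 1 - (-1)^q * (2^ρ * ((q + ρ - 1).choose ρ : ℤ)) := by
  unfold tkG; rw [if_neg h2, if_pos h]; ring

lemma tkG_mid {k V q ρ : ℕ} (h : ¬ ρ ≤ V+1) (h2 : ρ ≠ 2*k) :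
    tkG k V q ρ = 1 := by
  unfold tkG; rw [if_neg h2, if_neg h]; ring

lemma tkG_top {k V q : ℕ} (h : ¬ 2*k ≤ V+1) :
    tkG k V q (2*k) = 1 + (-1)^q * (2*(k:ℤ) - 2) := by
  unfold tkG; rw [if_pos rfl, if_neg h]; ring



lemma tkG_step0 (hk : 2 ≤ k) {V : ℕ} (hVk : V + 1 ≤ k - 1) (hV : (2:ℕ)^V ∣ (k-1)) (q : ℕ) :
    2 * tkG k V q (2*k) - tkG k V q 0 ≡ tkG k V (q+1) 0 [ZMOD (2^(V+2) : ℤ)] := by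
  rw [tkG_top (by omega), tkG_low (by omega) (by omega), tkG_low (by omega) (by omega)]
  simp only [Nat.add_zero, Nat.choose_zero_right, Nat.cast_one, pow_zero]
  rw [Int.modEq_iff_dvd]
  obtain ⟨w, hw⟩ := hV
  have hw' : 2*(k:ℤ) - 2 = 2 * 2^V * w := by
    have hk1 : k = 2^V * w + 1 := by omega
    push_cast [hk1]
    ring
  have e : (1 - (-1)^(q+1) * (1 * 1)) - (2 * (1 + (-1)^q * (2*(k:ℤ) - 2)) - (1 - (-1)^q * (1 * 1)))
      = (-1)^(q+1) * (2^(V+2) * w) := by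
    rw [pow_succ (-1:ℤ) q, hw']
    ring
  rw [e]
  exact Dvd.dvd.mul_left (Dvd.dvd.mul_right (dvd_refl _) _) _

lemma tkG_step (hk : 2 ≤ k) {V : ℕ} (hVk : V + 1 ≤ k - 1) (q ρ : ℕ) (hρ : ρ + 1 ≤ 2*k) :
    2 * tkG k V (q+1) ρ - tkG k V q (ρ+1) ≡ tkG k V (q+1) (ρ+1) [ZMOD (2^(V+2) : ℤ)] := by
  have e1 : (q+1) + ρ - 1 = q + ρ := by omega
  have e2 : q + (ρ+1) - 1 = q + ρ := by omega
  have e3 : (q+1) + (ρ+1) - 1 = q + ρ + 1 := by omega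
  by_cases hc1 : ρ + 1 ≤ V + 1
  · have hne1 : ρ ≠ 2*k := by omega
    have hne2 : ρ + 1 ≠ 2*k := by omega
    rw [tkG_low (show ρ ≤ V+1 by omega) hne1, tkG_low hc1 hne2, tkG_low hc1 hne2, e1, e2, e3]
    have hP : ((q+ρ+1).choose (ρ+1)) = (q+ρ).choose ρ + (q+ρ).choose (ρ+1) :=
      Nat.choose_succ_succ _ _
    rw [Int.modEq_iff_dvd]
    have e : (1 - (-1)^(q+1) * (2^(ρ+1) * ((q+ρ+1).choose (ρ+1) : ℤ)))
        - (2 * (1 - (-1)^(q+1) * (2^ρ * ((q+ρ).choose ρ : ℤ)))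
          - (1 - (-1)^q * (2^(ρ+1) * ((q+ρ).choose (ρ+1) : ℤ)))) = 0 := by
      push_cast [hP]
      rw [pow_succ (-1:ℤ) q, pow_succ (2:ℤ) ρ]
      ring
    rw [e]
    exact dvd_zero _
  · by_cases hc2 : ρ ≤ V + 1
    · have hne1 : ρ ≠ 2*k := by omega
      have hne2 : ρ + 1 ≠ 2*k := by omega
      rw [tkG_low hc2 hne1, tkG_mid hc1 hne2, tkG_mid hc1 hne2, e1]
      rw [Int.modEq_iff_dvd]
      have e : (1:ℤ) - (2 * (1 - (-1)^(q+1) * (2^ρ * ((q+ρ).choose ρ : ℤ))) - 1)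
          = (-1)^(q+1) * (2^(ρ+1) * ((q+ρ).choose ρ : ℤ)) := by
        rw [pow_succ (2:ℤ) ρ]; ring
      rw [e]
      have hρV : ρ = V + 1 := by omega
      rw [hρV]
      exact Dvd.dvd.mul_left (Dvd.dvd.mul_right (pow_dvd_pow 2 (by omega)) _) _
    · by_cases hc3 : ρ + 1 = 2*k
      · have hne1 : ρ ≠ 2*k := by omega
        rw [tkG_mid hc2 hne1, hc3, tkG_top (by omega), tkG_top (by omega)]
        rw [Int.modEq_iff_dvd]
        have e : (1 + (-1)^(q+1) * (2*(k:ℤ)-2)) - (2 * 1 - (1 + (-1)^q * (2*(k:ℤ)-2))) = 0 := by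
          rw [pow_succ (-1:ℤ) q]; ring
        rw [e]; exact dvd_zero _
      · have hne1 : ρ ≠ 2*k := by omega
        rw [tkG_mid hc2 hne1, tkG_mid hc1 hc3, tkG_mid hc1 hc3]
        have e : 2 * (1:ℤ) - 1 = 1 := by ring
        rw [e]


lemma tk_phase1 (hk : 2 ≤ k) {V : ℕ} (hVk : V + 1 ≤ k - 1) (hV : (2:ℕ)^V ∣ (k-1))
    (h0 : t 0 = 0)
    (h1 : ∀ n, 1 ≤ n → n ≤ 2 * k - 1 → t n = 1)
    (hrec : ∀ n, 2 * k ≤ n → t n = ∑ i ∈ Finset.Icc 1 (2 * k), t (n - i)) :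
    ∀ q ρ, ρ ≤ 2*k → ((t ((2*k+1)*q + ρ) : ℤ)) ≡ tkG k V q ρ [ZMOD (2^(V+2) : ℤ)] := by
  intro q
  induction q with
  | zero =>
    intro ρ hρ
    simp only [Nat.mul_zero, Nat.zero_add]
    by_cases h00 : ρ = 0
    · subst h00
      rw [h0, tkG_low (by omega) (by omega)]
      norm_num
    · by_cases h2k : ρ = 2*k
      · subst h2k
        rw [tk_2k k t hk h0 h1 hrec, tkG_top (by omega)]
        have e : ((2*k-1 : ℕ) : ℤ) = 1 + (-1)^(0:ℕ) * (2*(k:ℤ) - 2) := by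
          simp only [pow_zero, one_mul]; omega
        rw [e]
      · rw [h1 ρ (by omega) (by omega)]
        by_cases hV1 : ρ ≤ V+1
        · rw [tkG_low hV1 h2k]
          have e : (0 + ρ - 1).choose ρ = 0 := Nat.choose_eq_zero_of_lt (by omega)
          rw [e]
          norm_num
        · rw [tkG_mid hV1 h2k]
          norm_num
  | succ q ihq =>
    intro ρ
    induction ρ with
    | zero =>
      intro _
      have hidx : (2*k+1)*(q+1) + 0 = (2*k+1)*q + 2*k + 1 := by ring
      rw [hidx, tk_rec3z k t hk hrec ((2*k+1)*q)]
      have ha := ihq (2*k) (le_refl _)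
      have hb := ihq 0 (by omega)
      simp only [Nat.add_zero] at hb
      exact ((ha.mul_left 2).sub hb).trans (tkG_step0 k hk hVk hV q)
    | succ ρ ihρ =>
      intro hρ1
      have hidx : (2*k+1)*(q+1) + (ρ+1) = ((2*k+1)*q + (ρ+1)) + 2*k + 1 := by ring
      rw [hidx, tk_rec3z k t hk hrec ((2*k+1)*q + (ρ+1))]
      have e : (2*k+1)*q + (ρ+1) + 2*k = (2*k+1)*(q+1) + ρ := by ring
      rw [e]
      have ha := ihρ (by omega)
      have hb := ihq (ρ+1) (by omega)
      exact ((ha.mul_left 2).sub hb).trans (tkG_step k hk hVk q ρ hρ1)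



open Finset in
lemma tk_alt_sum (a : ℕ → ℤ) (j : ℕ) :
    ∑ i ∈ Finset.range (j+2), (-1:ℤ)^i * ((j+1).choose i : ℤ) * a i
    = (∑ i ∈ Finset.range (j+1), (-1:ℤ)^i * (j.choose i : ℤ) * a i)
      - ∑ i ∈ Finset.range (j+1), (-1:ℤ)^i * (j.choose i : ℤ) * a (i+1) := by
  rw [Finset.sum_range_succ' (fun i => (-1:ℤ)^i * ((j+1).choose i : ℤ) * a i) (j+1)]
  rw [Finset.sum_range_succ' (fun i => (-1:ℤ)^i * (j.choose i : ℤ) * a i) j]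
  simp only [pow_zero, Nat.choose_zero_right, Nat.cast_one, one_mul]
  have e1 : ∀ i ∈ Finset.range (j+1), (-1:ℤ)^(i+1) * (((j+1).choose (i+1) : ℕ) : ℤ) * a (i+1)
      = -((-1:ℤ)^i * (j.choose i : ℤ) * a (i+1)) - (-1:ℤ)^i * (j.choose (i+1) : ℤ) * a (i+1) := by
    intro i _
    have hP : (((j+1).choose (i+1) : ℕ) : ℤ) = (j.choose i : ℤ) + (j.choose (i+1) : ℤ) := by
      exact_mod_cast congrArg (Nat.cast (R := ℤ)) (Nat.choose_succ_succ j i)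
    rw [hP, pow_succ]
    ring
  rw [Finset.sum_congr rfl e1]
  have e2 : ∑ i ∈ Finset.range (j+1), (-1:ℤ)^(i+1) * (j.choose (i+1) : ℤ) * a (i+1)
      = ∑ i ∈ Finset.range j, (-1:ℤ)^(i+1) * (j.choose (i+1) : ℤ) * a (i+1) := by
    rw [Finset.sum_range_succ]
    simp
  have e3 : ∀ i ∈ Finset.range (j+1), (-((-1:ℤ)^i * (j.choose i : ℤ) * a (i+1))
      - (-1:ℤ)^i * (j.choose (i+1) : ℤ) * a (i+1))
      = -((-1:ℤ)^i * (j.choose i : ℤ) * a (i+1)) + ((-1:ℤ)^(i+1) * (j.choose (i+1) : ℤ) * a (i+1)) := by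
    intro i _
    rw [pow_succ]
    ring
  rw [Finset.sum_congr rfl e3, Finset.sum_add_distrib, ← e2]
  rw [show (∑ i ∈ Finset.range (j+1), -((-1:ℤ)^i * (j.choose i : ℤ) * a (i+1)))
      = -(∑ i ∈ Finset.range (j+1), (-1:ℤ)^i * (j.choose i : ℤ) * a (i+1)) from
    Finset.sum_neg_distrib _]
  ring

def tkg (k : ℕ) (t : ℕ → ℕ) (j n : ℕ) : ℤ :=
  (-1)^j * ∑ i ∈ Finset.range (j+1), (-1)^i * (j.choose i : ℤ) * (t (n + 2*k*i) : ℤ)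

lemma tkg_zero (k : ℕ) (t : ℕ → ℕ) (n : ℕ) : tkg k t 0 n = (t n : ℤ) := by
  simp [tkg]

lemma tkg_succ (k : ℕ) (t : ℕ → ℕ) (j n : ℕ) :
    tkg k t (j+1) n = tkg k t j (n + 2*k) - tkg k t j n := by
  unfold tkg
  have h := tk_alt_sum (fun i => (t (n + 2*k*i) : ℤ)) j
  rw [h]
  have e : ∀ i ∈ Finset.range (j+1), (-1:ℤ)^i * (j.choose i : ℤ) * (t ((n + 2*k) + 2*k*i) : ℤ)
      = (-1:ℤ)^i * (j.choose i : ℤ) * (t (n + 2*k*(i+1)) : ℤ) := by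
    intro i _
    have : (n + 2*k) + 2*k*i = n + 2*k*(i+1) := by ring
    rw [this]
  rw [Finset.sum_congr rfl e, pow_succ]
  ring

lemma tkg_shift (k : ℕ) (t : ℕ → ℕ)
    (r3 : ∀ n, (t (n + 2 * k + 1) : ℤ) = 2 * t (n + 2 * k) - t n) (j n : ℕ) :
    tkg k t j (n + (2*k+1)) = 2 * tkg k t j (n + 2*k) - tkg k t j n := by
  unfold tkg
  have e : ∀ i ∈ Finset.range (j+1), (-1:ℤ)^i * (j.choose i : ℤ) * (t ((n + (2*k+1)) + 2*k*i) : ℤ)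
      = 2 * ((-1:ℤ)^i * (j.choose i : ℤ) * (t ((n + 2*k) + 2*k*i) : ℤ))
        - (-1:ℤ)^i * (j.choose i : ℤ) * (t (n + 2*k*i) : ℤ) := by
    intro i _
    have e1 : (n + (2*k+1)) + 2*k*i = (n + 2*k*i) + 2*k + 1 := by ring
    have e2 : (n + 2*k*i) + 2*k = (n + 2*k) + 2*k*i := by ring
    rw [e1, r3 (n + 2*k*i), e2]
    ring
  rw [Finset.sum_congr rfl e, Finset.sum_sub_distrib, ← Finset.mul_sum]
  ring

lemma tkg_L3 (k : ℕ) (t : ℕ → ℕ)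
    (r3 : ∀ n, (t (n + 2 * k + 1) : ℤ) = 2 * t (n + 2 * k) - t n) (j n : ℕ) :
    tkg k t j (n + (2*k+1)) = tkg k t j n + 2 * tkg k t (j+1) n := by
  rw [tkg_shift k t r3 j n, tkg_succ k t j n]
  ring

lemma tk_master (k : ℕ) (t : ℕ → ℕ)
    (r3 : ∀ n, (t (n + 2 * k + 1) : ℤ) = 2 * t (n + 2 * k) - t n) :
    ∀ m n, (t ((2*k+1)*m + n) : ℤ)
      = ∑ j ∈ Finset.range (m+1), (m.choose j : ℤ) * 2^j * tkg k t j n := by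
  intro m
  induction m with
  | zero =>
    intro n
    simp [tkg]
  | succ m ih =>
    intro n
    have hidx : (2*k+1)*(m+1) + n = (2*k+1)*m + (n + (2*k+1)) := by ring
    rw [hidx, ih (n + (2*k+1))]
    have e : ∀ j ∈ Finset.range (m+1), (m.choose j : ℤ) * 2^j * tkg k t j (n + (2*k+1))
        = (m.choose j : ℤ) * 2^j * tkg k t j n + (m.choose j : ℤ) * 2^(j+1) * tkg k t (j+1) n := by
      intro j _
      rw [tkg_L3 k t r3 j n, pow_succ]
      ring
    rw [Finset.sum_congr rfl e, Finset.sum_add_distrib]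
    rw [Finset.sum_range_succ' (fun j => ((m+1).choose j : ℤ) * 2^j * tkg k t j n) (m+1)]
    simp only [pow_zero, Nat.choose_zero_right, Nat.cast_one, one_mul, mul_one]
    have e2 : ∀ j ∈ Finset.range (m+1), (((m+1).choose (j+1) : ℕ) : ℤ) * 2^(j+1) * tkg k t (j+1) n
        = (m.choose j : ℤ) * 2^(j+1) * tkg k t (j+1) n
          + (m.choose (j+1) : ℤ) * 2^(j+1) * tkg k t (j+1) n := by
      intro j _
      have hP : (((m+1).choose (j+1) : ℕ) : ℤ) = (m.choose j : ℤ) + (m.choose (j+1) : ℤ) := by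
        exact_mod_cast congrArg (Nat.cast (R := ℤ)) (Nat.choose_succ_succ m j)
      rw [hP]
      ring
    rw [Finset.sum_congr rfl e2, Finset.sum_add_distrib]
    have e3 : ∑ j ∈ Finset.range (m+1), (m.choose (j+1) : ℤ) * 2^(j+1) * tkg k t (j+1) n
        = ∑ j ∈ Finset.range (m+1), (m.choose j : ℤ) * 2^j * tkg k t j n - tkg k t 0 n := by
      rw [Finset.sum_range_succ' (fun j => (m.choose j : ℤ) * 2^j * tkg k t j n) m]
      simp only [pow_zero, Nat.choose_zero_right, Nat.cast_one, one_mul, mul_one]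
      rw [Finset.sum_range_succ]
      simp [Nat.choose_succ_self]
    rw [e3, tkg_zero]
    ring


lemma tk_pow_lin : ∀ b, 3 ≤ b → 2*b + 2 ≤ 2^b := by
  intro b hb
  induction b with
  | zero => omega
  | succ c ih =>
    rcases Nat.lt_or_ge c 3 with h | h
    · interval_cases c <;> omega
    · have := ih (by omega)
      have : 2^c ≤ 2^(c+1) := Nat.pow_le_pow_right (by norm_num) (by omega)
      have h2 : 2^(c+1) = 2 * 2^c := by rw [pow_succ]; ring
      omega

-- strip the odd part: if 2^s ∣ x * u with u odd then 2^s ∣ x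
lemma tk_strip {s : ℕ} {x u : ℕ} (hu : ¬ 2 ∣ u) (h : 2^s ∣ x * u) : 2^s ∣ x := by
  have hcop : Nat.Coprime (2^s) u :=
    Nat.Coprime.pow_left _ ((Nat.Prime.coprime_iff_not_dvd Nat.prime_two).mpr hu)
  exact hcop.dvd_of_dvd_mul_right h

-- writing y ≠ 0 as 2^(padicValNat 2 y) times an odd number
lemma tk_ord (y : ℕ) (hy : y ≠ 0) :
    ∃ u, ¬ 2 ∣ u ∧ y = 2^(padicValNat 2 y) * u := by
  refine ⟨y / 2^(padicValNat 2 y), Nat.not_dvd_ordCompl Nat.prime_two hy, ?_⟩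
  exact (Nat.ordProj_mul_ordCompl_eq_self y 2).symm

lemma tk_binom_val (m j : ℕ) (hj : 1 ≤ j) (hjm : j ≤ m) :
    (2:ℕ)^(padicValNat 2 m) ∣ 2^(padicValNat 2 j) * m.choose j := by
  have hid := Nat.add_one_mul_choose_eq (m-1) (j-1)
  rw [show m - 1 + 1 = m by omega, show j - 1 + 1 = j by omega] at hid
  -- hid : m * (m-1).choose (j-1) = m.choose j * j
  have h1 : (2:ℕ)^(padicValNat 2 m) ∣ m.choose j * j := by
    rw [← hid]
    exact Dvd.dvd.mul_right pow_padicValNat_dvd _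
  obtain ⟨u, hu, hju⟩ := tk_ord j (by omega)
  apply tk_strip hu
  have e4 : 2^(padicValNat 2 j) * m.choose j * u = m.choose j * (2^(padicValNat 2 j) * u) := by
    ring
  rw [e4, ← hju]
  exact h1

lemma tk_choose_val (k : ℕ) (hk : 2 ≤ k) {V : ℕ} (hV : (2:ℕ)^V ∣ (k-1)) :
    ∀ e, 2 ≤ e → e ≤ V+1 → (2:ℕ)^(V+2) ∣ 2^e * (2*k-1).choose e := by
  intro e he2 heV
  obtain ⟨u0, hu0, he0⟩ := tk_ord e (by omega)
  obtain ⟨u1, hu1, he1⟩ := tk_ord (e-1) (by omega)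
  set b0 := padicValNat 2 e with hb0def
  set b1 := padicValNat 2 (e-1) with hb1def
  have id1 : (2*k-2) * (2*k-3).choose (e-2) = (2*k-2).choose (e-1) * (e-1) := by
    have h := Nat.add_one_mul_choose_eq (2*k-3) (e-2)
    rw [show 2*k-3+1 = 2*k-2 by omega, show e-2+1 = e-1 by omega] at h
    exact h
  have id2 : (2*k-1) * (2*k-2).choose (e-1) = (2*k-1).choose e * e := by
    have h := Nat.add_one_mul_choose_eq (2*k-2) (e-1)
    rw [show 2*k-2+1 = 2*k-1 by omega, show e-1+1 = e by omega] at h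
    exact h
  obtain ⟨w, hw⟩ := hV
  have hVk2 : (2:ℕ)^(V+1) ∣ 2*k-2 := by
    refine ⟨w, ?_⟩
    calc 2*k-2 = 2*(k-1) := by omega
    _ = 2*(2^V*w) := by rw [hw]
    _ = 2^(V+1)*w := by rw [pow_succ]; ring
  have s1 : (2:ℕ)^(V+1) ∣ 2^b1 * (2*k-2).choose (e-1) := by
    apply tk_strip hu1
    have h2 : (2:ℕ)^(V+1) ∣ (2*k-2).choose (e-1) * (e-1) := by
      rw [← id1]; exact Dvd.dvd.mul_right hVk2 _
    have e4 : 2^b1 * (2*k-2).choose (e-1) * u1 = (2*k-2).choose (e-1) * (2^b1 * u1) := by ring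
    rw [e4, ← he1]
    exact h2
  have s2 : (2:ℕ)^(V+1) ∣ 2^(b1+b0) * (2*k-1).choose e := by
    apply tk_strip hu0
    have h3 : (2:ℕ)^(V+1) ∣ 2^b1 * ((2*k-1).choose e * e) := by
      rw [← id2]
      have e5 : 2^b1 * ((2*k-1) * (2*k-2).choose (e-1))
          = (2^b1 * (2*k-2).choose (e-1)) * (2*k-1) := by ring
      rw [e5]
      exact Dvd.dvd.mul_right s1 _
    have e6 : 2^(b1+b0) * (2*k-1).choose e * u0
        = 2^b1 * ((2*k-1).choose e * (2^b0 * u0)) := by rw [pow_add]; ring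
    rw [e6, ← he0]
    exact h3
  have hb01 : b1 + b0 + 1 ≤ e := by
    have h20 : b0 < 2^b0 := Nat.lt_two_pow_self (n := b0)
    have h21 : b1 < 2^b1 := Nat.lt_two_pow_self (n := b1)
    rcases Nat.even_or_odd e with he | he
    · have hz : b1 = 0 := by
        rw [hb1def]
        apply padicValNat.eq_zero_of_not_dvd
        intro h2d
        obtain ⟨c, hc⟩ := h2d
        obtain ⟨c2, hc2⟩ := he
        omega
      have hd : 2^b0 ∣ e := ⟨u0, he0⟩
      have := Nat.le_of_dvd (by omega) hd
      omega
    · have hz : b0 = 0 := by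
        rw [hb0def]
        apply padicValNat.eq_zero_of_not_dvd
        intro h2d
        obtain ⟨c, hc⟩ := h2d
        obtain ⟨c2, hc2⟩ := he
        omega
      have hd : 2^b1 ∣ e - 1 := ⟨u1, he1⟩
      have := Nat.le_of_dvd (by omega) hd
      omega
  obtain ⟨c, hc⟩ := s2
  obtain ⟨r, hr⟩ : ∃ r, e = (b1 + b0 + 1) + r := ⟨e - (b1+b0+1), by omega⟩
  refine ⟨2^r * c, ?_⟩
  have hpow : (2:ℕ)^e = 2^(b1+b0) * 2 * 2^r := by
    rw [hr, pow_add, pow_add, pow_one]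
  rw [hpow]
  have e7 : 2^(b1+b0) * 2 * 2^r * (2*k-1).choose e
      = (2^(b1+b0) * (2*k-1).choose e) * (2 * 2^r) := by ring
  rw [e7, hc, show (2:ℕ)^(V+2) = 2^(V+1) * 2 by rw [pow_succ]]
  ring

lemma tk_jbound (k : ℕ) (hk : 2 ≤ k) {V : ℕ} (hVk2 : 2^V ≤ k-1) :
    ∀ j, 2*k ≤ j → ¬(k = 2 ∧ j = 4) → padicValNat 2 j + (V+3) ≤ j := by
  intro j hj hexc
  haveI : Fact (Nat.Prime 2) := ⟨Nat.prime_two⟩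
  set b := padicValNat 2 j with hbdef
  have hbj : (2:ℕ)^b ∣ j := pow_padicValNat_dvd
  have hb2 : ¬ (2:ℕ)^(b+1) ∣ j := pow_succ_padicValNat_not_dvd (by omega)
  have h2V : V < 2^V := Nat.lt_two_pow_self (n := V)
  by_cases hbV : b ≤ V + 1
  · omega
  · have hj2b : 2^b ≤ j := Nat.le_of_dvd (by omega) hbj
    by_cases hb3 : 3 ≤ b
    · have := tk_pow_lin b hb3
      omega
    · -- b = 2, V = 0
      have hbV0 : b = 2 ∧ V = 0 := by omega
      obtain ⟨hb, hV0⟩ := hbV0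
      rw [hb] at hbj hb2
      norm_num at hbj hb2
      -- 4 ∣ j, ¬ 8 ∣ j, j ≠ 4
      omega

lemma tk_threepow : ∀ a u : ℕ, 1 ≤ a → ¬ 2 ∣ u →
    ∃ w : ℤ, ¬ (2:ℤ) ∣ w ∧ (3:ℤ)^(2^a * u) - 1 = 2^(a+2) * w := by
  intro a
  induction a with
  | zero => omega
  | succ c ih =>
    intro u hc1 hu
    rcases Nat.eq_zero_or_pos c with hc0 | hcpos
    · subst hc0
      obtain ⟨s, hs⟩ : ∃ s, u = 2*s + 1 := ⟨u/2, by omega⟩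
      obtain ⟨r, hr⟩ : ∃ r : ℤ, (9:ℤ)^s = 1 + 8*r := by
        have h := sub_dvd_pow_sub_pow (9:ℤ) 1 s
        simp only [one_pow] at h
        obtain ⟨r, hr⟩ := h
        exact ⟨r, by norm_num at hr; linarith⟩
      have h3u : (3:ℤ)^u = 3 + 24*r := by
        rw [hs, pow_add, pow_mul]
        norm_num [hr]
        ring
      have hexp : 2^1 * u = u + u := by omega
      refine ⟨1 + 18*r + 72*r^2, ?_, ?_⟩
      · rintro ⟨d, hd⟩; omega
      · rw [hexp, pow_add, h3u]; ring
    · obtain ⟨w, hwodd, hww⟩ := ih u (by omega) hu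
      have hexp : 2^(c+1) * u = (2^c*u) + (2^c*u) := by rw [pow_succ]; ring
      have hX : (3:ℤ)^(2^c*u) = 1 + 2^(c+2)*w := by linarith [hww]
      refine ⟨w + 2^(c+1)*w^2, ?_, ?_⟩
      · intro hdvd
        apply hwodd
        have h2 : (2:ℤ) ∣ 2^(c+1)*w^2 := Dvd.dvd.mul_right (dvd_pow_self 2 (by omega)) _
        obtain ⟨d1, hd1⟩ := hdvd
        obtain ⟨d2, hd2⟩ := h2
        exact ⟨d1 - d2, by linarith⟩
      · rw [hexp, pow_add, hX]
        have : ((c+1)+2) = (c+2)+1 := by omega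
        rw [this]
        ring


def tkc (k : ℕ) (j : ℕ) : ℤ := ((k:ℤ) - 1) - k * (-1)^j

lemma tk_modEq_sum {M : ℤ} {s : Finset ℕ} {f g : ℕ → ℤ}
    (h : ∀ i ∈ s, f i ≡ g i [ZMOD M]) : (∑ i ∈ s, f i) ≡ ∑ i ∈ s, g i [ZMOD M] := by
  rw [Int.modEq_iff_dvd, ← Finset.sum_sub_distrib]
  exact Finset.dvd_sum fun i hi => (h i hi).dvd

lemma tk_csum (k m : ℕ) :
    ∑ j ∈ Finset.range (m+1), (m.choose j : ℤ) * 2^j * tkc k j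
      = ((k:ℤ)-1)*3^m - k*(-1)^m := by
  have hb1 : ∑ j ∈ Finset.range (m+1), (m.choose j : ℤ) * 2^j = 3^m := by
    have h := add_pow (2:ℤ) 1 m
    norm_num at h
    rw [h]
    exact Finset.sum_congr rfl fun j _ => by ring
  have hb2 : ∑ j ∈ Finset.range (m+1), (m.choose j : ℤ) * (-2)^j = (-1)^m := by
    have h := add_pow (-2:ℤ) 1 m
    norm_num at h
    rw [h]
    exact Finset.sum_congr rfl fun j _ => by ring
  have key : ∀ j ∈ Finset.range (m+1), (m.choose j:ℤ)*2^j*tkc k j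
      = ((k:ℤ)-1) * ((m.choose j:ℤ)*2^j) - (k:ℤ) * ((m.choose j:ℤ)*(-2)^j) := by
    intro j _
    unfold tkc
    have hn : ((-2:ℤ))^j = (-1)^j * 2^j := by
      rw [show (-2:ℤ) = -1*2 by norm_num, mul_pow]
    rw [hn]
    ring
  rw [Finset.sum_congr rfl key, Finset.sum_sub_distrib, ← Finset.mul_sum, ← Finset.mul_sum,
    hb1, hb2]

lemma tk_dcong (hk : 2 ≤ k) {V : ℕ} (hVk : V + 1 ≤ k - 1) (hV : (2:ℕ)^V ∣ (k-1))
    (h0 : t 0 = 0)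
    (h1 : ∀ n, 1 ≤ n → n ≤ 2 * k - 1 → t n = 1)
    (hrec : ∀ n, 2 * k ≤ n → t n = ∑ i ∈ Finset.Icc 1 (2 * k), t (n - i)) :
    ∀ j, 1 ≤ j → j ≤ 2*k-1 → tkg k t j 0 ≡ tkc k j [ZMOD (2^(V+2) : ℤ)] := by
  intro j hj1 hj2
  have hP1 := tk_phase1 k t hk hVk hV h0 h1 hrec
  have hT : tkg k t j 0 = (-1:ℤ)^j * ∑ i ∈ Finset.range j,
      (-1:ℤ)^(i+1) * (j.choose (i+1) : ℤ) * (t (2*k*(i+1)) : ℤ) := by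
    unfold tkg
    rw [Finset.sum_range_succ' (fun i => (-1:ℤ)^i * (j.choose i : ℤ) * (t (0 + 2*k*i) : ℤ)) j]
    simp only [Nat.zero_add, pow_zero, Nat.choose_zero_right, Nat.cast_one, one_mul,
      Nat.mul_zero, h0, Nat.cast_zero, mul_zero, add_zero]
  have step2 : (∑ i ∈ Finset.range j, (-1:ℤ)^(i+1) * (j.choose (i+1) : ℤ) * (t (2*k*(i+1)) : ℤ))
      ≡ ∑ i ∈ Finset.range j, (-1:ℤ)^(i+1) * (j.choose (i+1) : ℤ) * tkG k V i (2*k-i)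
        [ZMOD (2^(V+2) : ℤ)] := by
    apply tk_modEq_sum
    intro i hi
    simp only [Finset.mem_range] at hi
    have hidx : 2*k*(i+1) = (2*k+1)*i + (2*k - i) := by
      obtain ⟨c, hc⟩ : ∃ c, 2*k = i + c := ⟨2*k - i, by omega⟩
      rw [hc, show i + c - i = c by omega]
      ring
    rw [hidx]
    exact (hP1 i (2*k-i) (by omega)).mul_left _
  have key : ∀ i ∈ Finset.range j, (-1:ℤ)^(i+1) * (j.choose (i+1) : ℤ) * tkG k V i (2*k-i)
      = (-1:ℤ)^(i+1) * (j.choose (i+1) : ℤ)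
        + (if i = 0 then -((j:ℤ))*(2*(k:ℤ)-2) else 0)
        + (if 2*k-i ≤ V+1 ∧ 1 ≤ i then
            (j.choose (i+1) : ℤ) * (2^(2*k-i) * (((2*k-1).choose (2*k-i) : ℕ) : ℤ)) else 0) := by
    intro i hi
    simp only [Finset.mem_range] at hi
    by_cases hi0 : i = 0
    · subst hi0
      rw [show 2*k - 0 = 2*k by omega, tkG_top (by omega)]
      rw [if_pos rfl, if_neg (by omega)]
      simp only [zero_add, Nat.choose_one_right, pow_zero, one_mul, pow_one]
      push_cast
      ring
    · by_cases hlow : 2*k - i ≤ V+1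
      · rw [tkG_low hlow (by omega), if_neg hi0, if_pos ⟨hlow, by omega⟩]
        rw [show i + (2*k-i) - 1 = 2*k-1 by omega]
        have hsq : ((-1:ℤ))^(i+1) * (-1)^i = -1 := by
          rw [pow_succ]
          have h2 : ((-1:ℤ))^i * (-1)^i = 1 := by
            rw [← pow_add]; exact Even.neg_one_pow ⟨i, rfl⟩
          linear_combination (-1 : ℤ) * h2
        linear_combination
          (-(((j.choose (i+1) : ℕ) : ℤ) * (2^(2*k-i) * (((2*k-1).choose (2*k-i) : ℕ) : ℤ)))) * hsq
      · rw [tkG_mid hlow (by omega), if_neg hi0, if_neg (fun h => hlow h.1)]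
        ring
  have hA : ∑ i ∈ Finset.range j, (-1:ℤ)^(i+1) * (j.choose (i+1) : ℤ) = -1 := by
    have h := Int.alternating_sum_range_choose_of_ne (show j ≠ 0 by omega)
    rw [Finset.sum_range_succ' (fun i => (-1:ℤ)^i * (j.choose i : ℤ)) j] at h
    simp only [pow_zero, Nat.choose_zero_right, Nat.cast_one, one_mul, mul_one] at h
    linarith
  have hB : ∑ i ∈ Finset.range j, (if i = 0 then -((j:ℤ))*(2*(k:ℤ)-2) else 0)
      = -((j:ℤ))*(2*(k:ℤ)-2) := by
    rw [Finset.sum_ite_eq' (Finset.range j) 0 (fun _ => -((j:ℤ))*(2*(k:ℤ)-2))]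
    rw [if_pos (Finset.mem_range.mpr (by omega))]
  have hC : (2^(V+2) : ℤ) ∣ ∑ i ∈ Finset.range j, (if 2*k-i ≤ V+1 ∧ 1 ≤ i then
      (j.choose (i+1) : ℤ) * (2^(2*k-i) * (((2*k-1).choose (2*k-i) : ℕ) : ℤ)) else 0) := by
    apply Finset.dvd_sum
    intro i hi
    simp only [Finset.mem_range] at hi
    by_cases hcnd : 2*k-i ≤ V+1 ∧ 1 ≤ i
    · rw [if_pos hcnd]
      have hnat := tk_choose_val k hk hV (2*k-i) (by omega) hcnd.1
      refine Dvd.dvd.mul_left ?_ _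
      have hz : ((2:ℤ))^(V+2) ∣ ((2^(2*k-i) * (2*k-1).choose (2*k-i) : ℕ) : ℤ) := by
        exact_mod_cast Int.natCast_dvd_natCast.mpr hnat
      push_cast at hz
      exact hz
    · rw [if_neg hcnd]; exact dvd_zero _
  have step3 : (∑ i ∈ Finset.range j, (-1:ℤ)^(i+1) * (j.choose (i+1) : ℤ) * tkG k V i (2*k-i))
      ≡ (-1 + -((j:ℤ))*(2*(k:ℤ)-2)) [ZMOD (2^(V+2) : ℤ)] := by
    rw [Finset.sum_congr rfl key, Finset.sum_add_distrib, Finset.sum_add_distrib, hA, hB]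
    rw [Int.modEq_iff_dvd]
    have e : (-1 + -((j:ℤ))*(2*(k:ℤ)-2)) - (-1 + -((j:ℤ))*(2*(k:ℤ)-2)
        + ∑ i ∈ Finset.range j, (if 2*k-i ≤ V+1 ∧ 1 ≤ i then
          (j.choose (i+1) : ℤ) * (2^(2*k-i) * (((2*k-1).choose (2*k-i) : ℕ) : ℤ)) else 0))
        = -(∑ i ∈ Finset.range j, (if 2*k-i ≤ V+1 ∧ 1 ≤ i then
          (j.choose (i+1) : ℤ) * (2^(2*k-i) * (((2*k-1).choose (2*k-i) : ℕ) : ℤ)) else 0)) := by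
      ring
    rw [e]
    exact (dvd_neg).mpr hC
  have htot : tkg k t j 0 ≡ (-1:ℤ)^j * (-1 + -((j:ℤ))*(2*(k:ℤ)-2)) [ZMOD (2^(V+2) : ℤ)] := by
    rw [hT]; exact (step2.trans step3).mul_left _
  refine htot.trans ?_
  rw [Int.modEq_iff_dvd]
  unfold tkc
  obtain ⟨w, hw⟩ := hV
  have hkz : (k:ℤ) = 2^V * w + 1 := by
    have hh : k = 2^V*w + 1 := by omega
    exact_mod_cast congrArg (Nat.cast (R := ℤ)) hh
  rcases Nat.even_or_odd j with hje | hjo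
  · obtain ⟨c, hc⟩ := hje
    have hp : ((-1:ℤ))^j = 1 := Even.neg_one_pow ⟨c, hc⟩
    have hcz : (j:ℤ) = 2*c := by
      have : j = 2*c := by omega
      exact_mod_cast congrArg (Nat.cast (R := ℤ)) this
    rw [hp]
    refine ⟨(w:ℤ) * c, ?_⟩
    rw [hcz, hkz]
    ring
  · obtain ⟨c, hc⟩ := hjo
    have hp : ((-1:ℤ))^j = -1 := Odd.neg_one_pow ⟨c, hc⟩
    have hcz : (j:ℤ) = 2*c + 1 := by
      exact_mod_cast congrArg (Nat.cast (R := ℤ)) hc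
    rw [hp]
    refine ⟨-((w:ℤ) * c), ?_⟩
    rw [hcz, hkz]
    ring

lemma tk_d4odd (h0 : t 0 = 0)
    (h1 : ∀ n, 1 ≤ n → n ≤ 2 * 2 - 1 → t n = 1)
    (hrec : ∀ n, 2 * 2 ≤ n → t n = ∑ i ∈ Finset.Icc 1 (2 * 2), t (n - i)) :
    (2:ℤ) ∣ (tkg 2 t 4 0 - tkc 2 4) := by
  have e4 := tk_sum_shift 2 t (by norm_num) hrec
  have e4' : ∀ n, t (n + 4) = t n + t (n+1) + t (n+2) + t (n+3) := by
    intro n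
    have h := e4 n
    rw [show (2*2 : ℕ) = 4 from rfl] at h
    rw [Finset.sum_range_succ, Finset.sum_range_succ, Finset.sum_range_succ,
      Finset.sum_range_succ, Finset.sum_range_zero] at h
    norm_num at h
    omega
  have h1' : t 1 = 1 := h1 1 (by norm_num) (by norm_num)
  have h2' : t 2 = 1 := h1 2 (by norm_num) (by norm_num)
  have h3' : t 3 = 1 := h1 3 (by norm_num) (by norm_num)
  have v4 : t 4 = 3 := by have := e4' 0; norm_num [h0, h1', h2', h3'] at this; omega
  have v5 : t 5 = 6 := by have := e4' 1; norm_num [h1', h2', h3', v4] at this; omega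
  have v6 : t 6 = 11 := by have := e4' 2; norm_num [h2', h3', v4, v5] at this; omega
  have v7 : t 7 = 21 := by have := e4' 3; norm_num [h3', v4, v5, v6] at this; omega
  have v8 : t 8 = 41 := by have := e4' 4; norm_num [v4, v5, v6, v7] at this; omega
  have v9 : t 9 = 79 := by have := e4' 5; norm_num [v5, v6, v7, v8] at this; omega
  have v10 : t 10 = 152 := by have := e4' 6; norm_num [v6, v7, v8, v9] at this; omega
  have v11 : t 11 = 293 := by have := e4' 7; norm_num [v7, v8, v9, v10] at this; omega
  have v12 : t 12 = 565 := by have := e4' 8; norm_num [v8, v9, v10, v11] at this; omega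
  have v13 : t 13 = 1089 := by have := e4' 9; norm_num [v9, v10, v11, v12] at this; omega
  have v14 : t 14 = 2099 := by have := e4' 10; norm_num [v10, v11, v12, v13] at this; omega
  have v15 : t 15 = 4046 := by have := e4' 11; norm_num [v11, v12, v13, v14] at this; omega
  have v16 : t 16 = 7799 := by have := e4' 12; norm_num [v12, v13, v14, v15] at this; omega
  have hg : tkg 2 t 4 0 = 5773 := by
    unfold tkg
    rw [Finset.sum_range_succ, Finset.sum_range_succ, Finset.sum_range_succ,
      Finset.sum_range_succ, Finset.sum_range_succ, Finset.sum_range_zero]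
    rw [show Nat.choose 4 2 = 6 from rfl]
    norm_num [v4, v8, v12, v16, h0]
  have hc : tkc 2 4 = -1 := by unfold tkc; norm_num
  rw [hg, hc]
  norm_num

lemma tk_term_dvd (hk : 2 ≤ k) {V : ℕ} (hVk : V + 1 ≤ k - 1) (hV : (2:ℕ)^V ∣ (k-1))
    (h0 : t 0 = 0)
    (h1 : ∀ n, 1 ≤ n → n ≤ 2 * k - 1 → t n = 1)
    (hrec : ∀ n, 2 * k ≤ n → t n = ∑ i ∈ Finset.Icc 1 (2 * k), t (n - i))
    (m : ℕ) :
    ∀ j, 1 ≤ j → j ≤ m →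
      (2^(padicValNat 2 m + V + 3) : ℤ) ∣ (m.choose j : ℤ) * 2^j * (tkg k t j 0 - tkc k j) := by
  intro j hj1 hjm
  haveI : Fact (Nat.Prime 2) := ⟨Nat.prime_two⟩
  set a := padicValNat 2 m with hadef
  set b := padicValNat 2 j with hbdef
  have hfact1 : (2:ℕ)^a ∣ 2^b * m.choose j := tk_binom_val m j hj1 hjm
  have hbj : b + 1 ≤ j := by
    have hd1 : (2:ℕ)^b ∣ j := pow_padicValNat_dvd
    have hd2 : 2^b ≤ j := Nat.le_of_dvd (by omega) hd1
    have hd3 : b < 2^b := Nat.lt_two_pow_self (n := b)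
    omega
  obtain ⟨c1, hc1⟩ := hfact1
  have hc1z : (2:ℤ)^b * (m.choose j : ℤ) = 2^a * (c1:ℤ) := by
    exact_mod_cast congrArg (Nat.cast (R := ℤ)) hc1
  by_cases hsmall : j ≤ 2*k - 1
  · have hd := (tk_dcong k t hk hVk hV h0 h1 hrec j hj1 hsmall).dvd
    obtain ⟨c2, hc2⟩ := hd
    obtain ⟨r, hr⟩ : ∃ r, j = b + 1 + r := ⟨j - (b+1), by omega⟩
    refine ⟨(c1:ℤ) * 2^r * (-c2), ?_⟩
    have hpj : (2:ℤ)^j = 2^b * 2 * 2^r := by rw [hr, pow_add, pow_add, pow_one]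
    have hgc : tkg k t j 0 - tkc k j = 2^(V+2) * (-c2) := by linarith [hc2]
    rw [hpj, hgc]
    have e : (m.choose j:ℤ) * (2^b*2*2^r) * (2^(V+2) * (-c2))
        = (2^b * (m.choose j:ℤ)) * (2 * 2^r * (2^(V+2) * (-c2))) := by ring
    rw [e, hc1z, show (2:ℤ)^(a+V+3) = 2^a * 2^(V+2) * 2 by
      rw [show a+V+3 = a+(V+2)+1 by omega, pow_add, pow_add, pow_one]]
    ring
  · by_cases hexc : k = 2 ∧ j = 4
    · obtain ⟨hk2, hj4⟩ := hexc
      subst hk2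
      subst hj4
      have hV0 : V = 0 := by omega
      subst hV0
      have hd2 := tk_d4odd t h0 h1 hrec
      obtain ⟨c2, hc2⟩ := hd2
      have hb4 : b = 2 := by
        rw [hbdef, show (4:ℕ) = 2^2 by norm_num, padicValNat.prime_pow]
      rw [hb4] at hc1z
      refine ⟨(c1:ℤ) * c2, ?_⟩
      rw [hc2]
      have e : (m.choose 4:ℤ) * 2^4 * (2*c2) = (2^2 * (m.choose 4:ℤ)) * (2^2 * (2 * c2)) := by
        ring
      rw [e, hc1z, show (2:ℤ)^(a+0+3) = 2^a * 2^3 by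
        rw [show a+0+3 = a+3 by omega, pow_add]]
      ring
    · have hjb := tk_jbound k hk (Nat.le_of_dvd (by omega) hV) j (by omega) hexc
      obtain ⟨r, hr⟩ : ∃ r, j = b + (V+3) + r := ⟨j - (b+(V+3)), by omega⟩
      refine ⟨(c1:ℤ) * 2^r * (tkg k t j 0 - tkc k j), ?_⟩
      have hpj : (2:ℤ)^j = 2^b * 2^(V+3) * 2^r := by rw [hr, pow_add, pow_add]
      rw [hpj]
      have e : (m.choose j:ℤ) * (2^b * 2^(V+3) * 2^r) * (tkg k t j 0 - tkc k j)
          = (2^b * (m.choose j:ℤ)) * (2^(V+3) * (2^r * (tkg k t j 0 - tkc k j))) := by ring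
      rw [e, hc1z, show (2:ℤ)^(a+V+3) = 2^a * 2^(V+3) by
        rw [show a+V+3 = a+(V+3) by omega, pow_add]]
      ring

lemma tk_val_eq {x : ℕ} {c : ℕ} {z : ℤ} (hx : (x:ℤ) = 2^c * z) (hz : ¬ (2:ℤ) ∣ z) :
    padicValNat 2 x = c := by
  haveI : Fact (Nat.Prime 2) := ⟨Nat.prime_two⟩
  have hz0 : z ≠ 0 := by rintro rfl; exact hz (dvd_zero 2)
  have hx0 : x ≠ 0 := by
    intro h
    apply hz0
    have hzz : (2:ℤ)^c * z = 0 := by rw [← hx, h]; norm_num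
    rcases mul_eq_zero.mp hzz with h2 | h2
    · exact absurd h2 (pow_ne_zero c two_ne_zero)
    · exact h2
  apply le_antisymm
  · by_contra hlt
    have hdvd : (2:ℕ)^(c+1) ∣ x := (padicValNat_dvd_iff_le hx0).mpr (by omega)
    have hdz : ((2^(c+1) : ℕ) : ℤ) ∣ (x:ℤ) := Int.natCast_dvd_natCast.mpr hdvd
    push_cast at hdz
    rw [hx] at hdz
    obtain ⟨d, hd⟩ := hdz
    apply hz
    refine ⟨d, ?_⟩
    have hcc : (2:ℤ)^c * z = 2^c * (2*d) := by
      rw [hd, pow_succ]; ring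
    exact mul_left_cancel₀ (pow_ne_zero c two_ne_zero) hcc
  · apply (padicValNat_dvd_iff_le hx0).mp
    have h2 : ((2^c : ℕ) : ℤ) ∣ (x:ℤ) := by push_cast; exact ⟨z, hx⟩
    exact_mod_cast h2

end TwoKNacciDev

theorem twoknacci_val_formula (k : ℕ) (hk : 2 ≤ k) (t : ℕ → ℕ)
    (h0 : t 0 = 0)
    (h1 : ∀ n, 1 ≤ n → n ≤ 2 * k - 1 → t n = 1)
    (hrec : ∀ n, 2 * k ≤ n → t n = ∑ i ∈ Finset.Icc 1 (2 * k), t (n - i)) :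
    ∀ n : ℕ, 0 < n → (2 * (2 * k + 1)) ∣ n →
      padicValNat 2 (t n) = padicValNat 2 n + padicValNat 2 (k - 1) + 2 := by
  intro n hn hdvd
  haveI : Fact (Nat.Prime 2) := ⟨Nat.prime_two⟩
  obtain ⟨c0, hc0⟩ := hdvd
  set m := 2 * c0 with hmdef
  have hnm : n = (2*k+1) * m := by rw [hc0, hmdef]; ring
  have hm0 : m ≠ 0 := by
    intro h
    rw [h, Nat.mul_zero] at hnm
    omega
  set V := padicValNat 2 (k-1) with hVdef
  set a := padicValNat 2 m with hadef
  have hk1 : k - 1 ≠ 0 := by omega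
  have hV : (2:ℕ)^V ∣ (k-1) := pow_padicValNat_dvd
  have hVk : V + 1 ≤ k - 1 := by
    have h1' := Nat.le_of_dvd (by omega) hV
    have h2' := Nat.lt_two_pow_self (n := V)
    omega
  have r3 := tk_rec3z k t hk hrec
  obtain ⟨u, hu, hmu⟩ := tk_ord m hm0
  rw [← hadef] at hmu
  have ha1 : 1 ≤ a := by
    by_contra h
    have ha0 : a = 0 := by omega
    rw [ha0, pow_zero, Nat.one_mul] at hmu
    apply hu
    rw [← hmu]
    exact ⟨c0, hmdef⟩
  have hmaster := tk_master k t r3 m 0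
  simp only [Nat.add_zero] at hmaster
  rw [← hnm] at hmaster
  have hcsum := tk_csum k m
  have hErr : (t n : ℤ) = (((k:ℤ)-1)*3^m - k*(-1)^m)
      + (1 + ∑ j ∈ Finset.range m,
          ((m.choose (j+1) : ℤ)) * 2^(j+1) * (tkg k t (j+1) 0 - tkc k (j+1))) := by
    rw [hmaster, ← hcsum]
    have hsplit : ∑ j ∈ Finset.range (m+1), (m.choose j : ℤ)*2^j*tkg k t j 0
        = ∑ j ∈ Finset.range (m+1), (m.choose j : ℤ)*2^j*tkc k j
          + ∑ j ∈ Finset.range (m+1), (m.choose j : ℤ)*2^j*(tkg k t j 0 - tkc k j) := by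
      rw [← Finset.sum_add_distrib]
      exact Finset.sum_congr rfl fun j _ => by ring
    rw [hsplit]
    congr 1
    rw [Finset.sum_range_succ' (fun j => (m.choose j : ℤ)*2^j*(tkg k t j 0 - tkc k j)) m]
    have hf0 : (m.choose 0 : ℤ)*2^0*(tkg k t 0 0 - tkc k 0) = 1 := by
      rw [tkg_zero]
      unfold tkc
      norm_num [h0]
    rw [hf0]
    ring
  have hdivE : (2^(a+V+3) : ℤ) ∣ ∑ j ∈ Finset.range m,
      ((m.choose (j+1) : ℤ)) * 2^(j+1) * (tkg k t (j+1) 0 - tkc k (j+1)) := by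
    apply Finset.dvd_sum
    intro j hj
    simp only [Finset.mem_range] at hj
    exact tk_term_dvd k t hk hVk hV h0 h1 hrec m (j+1) (by omega) (by omega)
  obtain ⟨D, hD⟩ := hdivE
  have hmeven : ((-1:ℤ))^m = 1 := Even.neg_one_pow ⟨c0, by omega⟩
  obtain ⟨w2, hw2odd, hw2⟩ := tk_threepow a u ha1 hu
  obtain ⟨w1, hw1odd, hw1⟩ := tk_ord (k-1) hk1
  rw [← hVdef] at hw1
  have hfinal : (t n : ℤ) = 2^(a+V+2) * ((w1:ℤ) * w2 + 2 * D) := by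
    rw [hErr, hD, hmeven]
    have hkz : (k:ℤ) - 1 = 2^V * w1 := by
      have hh : k = 2^V * w1 + 1 := by omega
      have := congrArg (Nat.cast (R := ℤ)) hh
      push_cast at this
      omega
    have h3m : (3:ℤ)^m - 1 = 2^(a+2) * w2 := by
      rw [hmu]
      exact hw2
    have e1 : ((k:ℤ)-1)*3^m - (k:ℤ)*1 + (1 + 2^(a+V+3) * D)
        = ((k:ℤ)-1)*((3:ℤ)^m - 1) + 2^(a+V+3) * D := by ring
    rw [e1, hkz, h3m]
    rw [show (2:ℤ)^(a+V+3) = 2^V * 2^(a+2) * 2 by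
      rw [show a+V+3 = V+(a+2)+1 by omega, pow_add, pow_add, pow_one]]
    rw [show (2:ℤ)^(a+V+2) = 2^V * 2^(a+2) by
      rw [show a+V+2 = V+(a+2) by omega, pow_add]]
    ring
  have hodd : ¬ (2:ℤ) ∣ ((w1:ℤ) * w2 + 2 * D) := by
    rintro ⟨d, hd⟩
    have hw1z : ¬ (2:ℤ) ∣ (w1:ℤ) := by
      intro hh
      exact hw1odd (by exact_mod_cast hh)
    have hmul : (2:ℤ) ∣ (w1:ℤ) * w2 := ⟨d - D, by linarith⟩
    rcases (Int.prime_two.2.2 _ _ hmul) with h | h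
    · exact hw1z h
    · exact hw2odd h
  have hvt : padicValNat 2 (t n) = a + V + 2 := tk_val_eq hfinal hodd
  have hvn : padicValNat 2 n = a := by
    rw [hnm, padicValNat.mul (by omega) hm0]
    rw [padicValNat.eq_zero_of_not_dvd (by omega : ¬ 2 ∣ (2*k+1))]
    omega
  rw [hvt, hvn]
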